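/- arXiv:2508.08247 — 7 statements merged into one kernel-verified Lean document; each statement's English description precedes it below -/
import Mathlib

section
/- For any continuous antisymmetric function f : K × K → ℝ on a compact set K ⊂ ℝ^N and any ε > 0, there exist M ∈ ℕ, a continuous map φ : K → ℝ^M, and a skew-symmetric M × M real matrix A such that sup_{x,y ∈ K} |f(x,y) - φ(y)ᵀ A φ(x)| < ε. -/
open Matrix

/-- Any continuous antisymmetric `f : K × K → ℝ` on a compact `K ⊆ ℝ^N`
can be uniformly approximated to accuracy `ε` by an antisymmetric quadratic form
`φ(y)ᵀ A φ(x)` with `φ : K → ℝ^M` continuous and `A` skew-symmetric. -/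
theorem stmt_1 {N : ℕ} (K : Set (EuclideanSpace ℝ (Fin N))) (hK : IsCompact K)
    (f : K × K → ℝ) (hf : Continuous f)
    (hanti : ∀ x y : K, f (y, x) = - f (x, y))
    (ε : ℝ) (hε : 0 < ε) :
    ∃ (M : ℕ) (φ : K → (Fin M → ℝ)) (A : Matrix (Fin M) (Fin M) ℝ),
      Continuous φ ∧ Aᵀ = -A ∧
      ∀ x y : K, |f (x, y) - φ y ⬝ᵥ (A *ᵥ φ x)| < ε := by
  haveI : CompactSpace K := isCompact_iff_compactSpace.mp hK
  -- the set of "product" functions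
  set S : Set C(K × K, ℝ) :=
    {p | ∃ a b : C(K, ℝ), ∀ z, p z = a z.1 * b z.2} with hSdef
  have hone : (1 : C(K × K, ℝ)) ∈ S := ⟨1, 1, fun z => by simp⟩
  have hmul : ∀ p ∈ S, ∀ q ∈ S, p * q ∈ S := by
    rintro p ⟨a₁, b₁, h₁⟩ q ⟨a₂, b₂, h₂⟩
    exact ⟨a₁ * a₂, b₁ * b₂, fun z => by simp [h₁ z, h₂ z]; ring⟩
  -- the generated subalgebra separates points
  have hsep : (Algebra.adjoin ℝ S).SeparatesPoints := by
    intro z w hzw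
    have : z.1 ≠ w.1 ∨ z.2 ≠ w.2 := by
      by_contra h
      push_neg at h
      exact hzw (Prod.ext h.1 h.2)
    rcases this with h | h
    · refine ⟨_, ⟨⟨fun q => dist q.1 z.1, by fun_prop⟩, Algebra.subset_adjoin
        ⟨⟨fun x => dist x z.1, by fun_prop⟩, 1, fun q => by simp⟩, rfl⟩, ?_⟩
      simp only [ContinuousMap.coe_mk]
      rw [dist_self]
      intro hc
      exact h (dist_eq_zero.mp hc.symm).symm
    · refine ⟨_, ⟨⟨fun q => dist q.2 z.2, by fun_prop⟩, Algebra.subset_adjoin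
        ⟨1, ⟨fun x => dist x z.2, by fun_prop⟩, fun q => by simp⟩, rfl⟩, ?_⟩
      simp only [ContinuousMap.coe_mk]
      rw [dist_self]
      intro hc
      exact h (dist_eq_zero.mp hc.symm).symm
  -- approximate f by an element of the subalgebra
  obtain ⟨⟨F, hF⟩, hdist⟩ :=
    ContinuousMap.exists_mem_subalgebra_near_continuousMap_of_separatesPoints
      (Algebra.adjoin ℝ S) hsep ⟨f, hf⟩ (ε / 2) (by linarith)
  -- F is a finite sum of products
  have hFspan : F ∈ Submodule.span ℝ S := by
    have h1 : F ∈ Subalgebra.toSubmodule (Algebra.adjoin ℝ S) := hF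
    rw [Algebra.adjoin_eq_span] at h1
    refine Submodule.span_le.mpr ?_ h1
    intro p hp
    refine Submodule.subset_span ?_
    exact Submonoid.closure_le (S := ⟨⟨S, fun ha hb => hmul _ ha _ hb⟩, hone⟩) |>.mpr
      (le_refl _) hp
  obtain ⟨n, c, s, hsum⟩ := Submodule.mem_span_set'.mp hFspan
  choose a b hab using fun i => (s i).2
  have hFz : ∀ z, F z = ∑ i, c i * (a i z.1 * b i z.2) := by
    intro z
    rw [← hsum]
    simp only [ContinuousMap.coe_sum, Finset.sum_apply, ContinuousMap.coe_smul, Pi.smul_apply,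
      smul_eq_mul]
    exact Finset.sum_congr rfl fun i _ => by rw [hab i z]
  -- the pointwise approximation bound
  have key : ∀ z : K × K, |f z - F z| < ε / 2 := by
    intro z
    calc |f z - F z| ≤ ‖(F : C(K × K, ℝ)) - ⟨f, hf⟩‖ := by
          have := ContinuousMap.norm_coe_le_norm ((F : C(K × K, ℝ)) - ⟨f, hf⟩) z
          simpa [abs_sub_comm] using this
      _ < ε / 2 := hdist
  -- build φ and A
  set u : Fin n → K → ℝ := fun i x => c i / 2 * a i x with hu
  set v : Fin n → K → ℝ := fun i x => b i x with hv
  refine ⟨n + n, fun x => Fin.append (fun i => u i x) (fun i => v i x),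
    Matrix.of (fun j k =>
      Fin.addCases
        (fun i => Fin.addCases (fun _ => (0 : ℝ)) (fun i' => if i = i' then -1 else 0) k)
        (fun i => Fin.addCases (fun i' => if i = i' then 1 else 0) (fun _ => 0) k) j),
    ?_, ?_, ?_⟩
  · refine continuous_pi fun j => ?_
    refine Fin.addCases (motive := fun j =>
      Continuous fun x => Fin.append (fun i => u i x) (fun i => v i x) j) ?_ ?_ j
    · intro i
      simp only [Fin.append_left, hu]
      exact continuous_const.mul (a i).continuous
    · intro i
      simp only [Fin.append_right, hv]
      exact (b i).continuous
  · ext j k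
    simp only [Matrix.transpose_apply, Matrix.of_apply, Matrix.neg_apply]
    refine Fin.addCases ?_ ?_ j <;> intro i <;> refine Fin.addCases ?_ ?_ k <;> intro i' <;>
      simp only [Fin.addCases_left, Fin.addCases_right] <;>
      by_cases h : i = i' <;> simp [h, eq_comm]
  · intro x y
    have hdot : Fin.append (fun i => u i y) (fun i => v i y) ⬝ᵥ
        (Matrix.of (fun j k =>
          Fin.addCases
            (fun i => Fin.addCases (fun _ => (0 : ℝ)) (fun i' => if i = i' then -1 else 0) k)
            (fun i => Fin.addCases (fun i' => if i = i' then 1 else 0) (fun _ => 0) k) j) *ᵥ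
          Fin.append (fun i => u i x) (fun i => v i x)) =
        (∑ i, v i y * u i x) - ∑ i, u i y * v i x := by
      simp only [dotProduct, Matrix.mulVec, Matrix.of_apply]
      rw [Fin.sum_univ_add]
      simp only [Fin.append_left, Fin.append_right, Fin.addCases_left, Fin.addCases_right]
      have e1 : ∀ i : Fin n,
          (∑ k : Fin (n + n),
            Fin.addCases (fun _ => (0:ℝ)) (fun i' => if i = i' then -1 else 0) k *
              Fin.append (fun i => u i x) (fun i => v i x) k) = -(v i x) := by
        intro i
        rw [Fin.sum_univ_add]
        simp only [Fin.addCases_left, Fin.addCases_right, Fin.append_left, Fin.append_right,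
          zero_mul, Finset.sum_const_zero, zero_add, ite_mul, neg_mul, one_mul, neg_zero,
          Finset.sum_ite_eq, Finset.mem_univ, if_true]
      have e2 : ∀ i : Fin n,
          (∑ k : Fin (n + n),
            Fin.addCases (fun i' => if i = i' then (1:ℝ) else 0) (fun _ => 0) k *
              Fin.append (fun i => u i x) (fun i => v i x) k) = u i x := by
        intro i
        rw [Fin.sum_univ_add]
        simp only [Fin.addCases_left, Fin.addCases_right, Fin.append_left, Fin.append_right,
          zero_mul, Finset.sum_const_zero, add_zero, ite_mul, one_mul, zero_add,
          Finset.sum_ite_eq, Finset.mem_univ, if_true]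
      simp only [e1, e2, mul_neg]
      rw [Finset.sum_neg_distrib]
      ring
    rw [hdot]
    have h1 := key (x, y)
    have h2 := key (y, x)
    have hFxy := hFz (x, y)
    have hFyx := hFz (y, x)
    have hsum1 : (∑ i, v i y * u i x) = (∑ i, c i * (a i x * b i y)) / 2 := by
      rw [Finset.sum_div]
      exact Finset.sum_congr rfl fun i _ => by simp only [hu, hv]; ring
    have hsum2 : (∑ i, u i y * v i x) = (∑ i, c i * (a i y * b i x)) / 2 := by
      rw [Finset.sum_div]
      exact Finset.sum_congr rfl fun i _ => by simp only [hu, hv]; ring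
    rw [hsum1, hsum2, ← hFxy, ← hFyx]
    have hA := hanti x y
    rw [abs_lt] at h1 h2 ⊢
    constructor <;> nlinarith [h1.1, h1.2, h2.1, h2.2]
end

section
/- For any continuous function S : K × K → ℝ on a compact set K ⊂ ℝ^N with S(y,x) = -S(x,y), and any ε > 0, there exist M ∈ ℕ, a continuous map φ : K → ℝ^M, a skew-symmetric matrix A, and a symmetric matrix B (both M × M real) such that sup_{x,y ∈ K} |S(x,y) - (φ(y)ᵀ A φ(x) + (1/2)φ(y)ᵀ B φ(y) - (1/2)φ(x)ᵀ B φ(x))| < ε. -/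
open Matrix


lemma key {N : ℕ} (K : Set (EuclideanSpace ℝ (Fin N))) (hK : IsCompact K)
    (S : K × K → ℝ) (hS : Continuous S) (ε : ℝ) (hε : 0 < ε) :
    ∃ (n : ℕ) (f g : Fin n → C(K, ℝ)),
      ∀ p : K × K, |S p - ∑ i, f i p.1 * g i p.2| < ε := by
  haveI : CompactSpace K := isCompact_iff_compactSpace.mp hK
  set fstm : C(K × K, K) := ⟨Prod.fst, continuous_fst⟩ with hfstm
  set sndm : C(K × K, K) := ⟨Prod.snd, continuous_snd⟩ with hsndm
  set P : Submonoid C(K × K, ℝ) :=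
    { carrier := {h | ∃ f g : C(K, ℝ), h = f.comp fstm * g.comp sndm}
      one_mem' := ⟨1, 1, by ext p; simp⟩
      mul_mem' := by
        rintro a b ⟨f₁, g₁, rfl⟩ ⟨f₂, g₂, rfl⟩
        exact ⟨f₁ * f₂, g₁ * g₂, by ext p; simp; ring⟩ } with hP
  set A : Subalgebra ℝ C(K × K, ℝ) := Algebra.adjoin ℝ (P : Set C(K × K, ℝ)) with hA
  have hsep : A.SeparatesPoints := by
    rintro p q hpq
    have : p.1 ≠ q.1 ∨ p.2 ≠ q.2 := by
      by_contra h
      push_neg at h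
      exact hpq (Prod.ext h.1 h.2)
    rcases this with h | h
    · refine ⟨_, ⟨(⟨fun x => dist (x : EuclideanSpace ℝ (Fin N)) (q.1 : EuclideanSpace ℝ (Fin N)),
        (continuous_subtype_val.dist continuous_const)⟩ : C(K, ℝ)).comp fstm * (1 : C(K, ℝ)).comp sndm,
        Algebra.subset_adjoin ⟨_, 1, rfl⟩, rfl⟩, ?_⟩
      simp only [ContinuousMap.mul_apply, ContinuousMap.comp_apply, ContinuousMap.one_apply,
        ContinuousMap.coe_mk]
      have : (p.1 : EuclideanSpace ℝ (Fin N)) ≠ (q.1 : EuclideanSpace ℝ (Fin N)) :=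
        fun hc => h (Subtype.coe_injective hc)
      simp [hfstm, dist_eq_zero, this]
    · refine ⟨_, ⟨(1 : C(K, ℝ)).comp fstm * (⟨fun x => dist (x : EuclideanSpace ℝ (Fin N)) (q.2 : EuclideanSpace ℝ (Fin N)),
        (continuous_subtype_val.dist continuous_const)⟩ : C(K, ℝ)).comp sndm,
        Algebra.subset_adjoin ⟨1, _, rfl⟩, rfl⟩, ?_⟩
      simp only [ContinuousMap.mul_apply, ContinuousMap.comp_apply, ContinuousMap.one_apply,
        ContinuousMap.coe_mk]
      have : (p.2 : EuclideanSpace ℝ (Fin N)) ≠ (q.2 : EuclideanSpace ℝ (Fin N)) :=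
        fun hc => h (Subtype.coe_injective hc)
      simp [hsndm, dist_eq_zero, this]
  have htop := ContinuousMap.subalgebra_topologicalClosure_eq_top_of_separatesPoints A hsep
  set Sc : C(K × K, ℝ) := ⟨S, hS⟩ with hSc
  have hmem : Sc ∈ closure (A : Set C(K × K, ℝ)) := by
    have : Sc ∈ A.topologicalClosure := htop ▸ Algebra.mem_top
    exact this
  obtain ⟨T, hTA, hTd⟩ := Metric.mem_closure_iff.mp hmem ε hε
  have hTspan : T ∈ Submodule.span ℝ (P : Set C(K × K, ℝ)) := by
    have : T ∈ Subalgebra.toSubmodule A := hTA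
    rw [hA, Algebra.adjoin_eq_span, Submonoid.closure_eq] at this
    exact this
  obtain ⟨n, c, v, hv⟩ := Submodule.mem_span_set'.mp hTspan
  have hvP : ∀ i, ∃ f g : C(K, ℝ), (v i : C(K × K, ℝ)) = f.comp fstm * g.comp sndm :=
    fun i => (v i).2
  choose f g hfg using hvP
  refine ⟨n, fun i => c i • f i, g, fun p => ?_⟩
  have hTp : T p = ∑ i, (c i • f i) p.1 * g i p.2 := by
    rw [← hv]
    simp only [ContinuousMap.coe_sum, Finset.sum_apply, ContinuousMap.coe_smul, Pi.smul_apply]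
    refine Finset.sum_congr rfl fun i _ => ?_
    rw [hfg i]
    simp only [ContinuousMap.mul_apply, ContinuousMap.comp_apply, smul_eq_mul, hfstm, hsndm,
      ContinuousMap.coe_mk]
    ring
  rw [← hTp]
  calc |S p - T p| = dist (Sc p) (T p) := by rw [Real.dist_eq]; rfl
    _ ≤ dist Sc T := ContinuousMap.dist_apply_le_dist p
    _ < ε := hTd


/-- LENS universality: Any continuous antisymmetric `S : K × K → ℝ` on a
compact `K ⊆ ℝ^N` can be uniformly approximated to accuracy `ε` by
`φ(y)ᵀ A φ(x) + (1/2) φ(y)ᵀ B φ(y) - (1/2) φ(x)ᵀ B φ(x)`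
with `φ : K → ℝ^M` continuous, `A` skew-symmetric and `B` symmetric. -/
theorem stmt_3 {N : ℕ} (K : Set (EuclideanSpace ℝ (Fin N))) (hK : IsCompact K)
    (S : K × K → ℝ) (hS : Continuous S)
    (hanti : ∀ x y : K, S (y, x) = - S (x, y))
    (ε : ℝ) (hε : 0 < ε) :
    ∃ (M : ℕ) (φ : K → (Fin M → ℝ)) (A B : Matrix (Fin M) (Fin M) ℝ),
      Continuous φ ∧ Aᵀ = -A ∧ Bᵀ = B ∧
      ∀ x y : K,
        |S (x, y) - (φ y ⬝ᵥ (A *ᵥ φ x)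
            + (1 / 2) * (φ y ⬝ᵥ (B *ᵥ φ y)) - (1 / 2) * (φ x ⬝ᵥ (B *ᵥ φ x)))| < ε := by
  obtain ⟨n, f, g, hfg⟩ := key K hK S hS ε hε
  set e : Fin n ⊕ Fin n ≃ Fin (n + n) := finSumFinEquiv with he
  set φ : K → Fin (n + n) → ℝ :=
    fun x j => Sum.elim (fun i => f i x) (fun i => g i x) (e.symm j) with hφ
  set A₀ : Matrix (Fin n ⊕ Fin n) (Fin n ⊕ Fin n) ℝ :=
    Matrix.fromBlocks 0 (-(2⁻¹ : ℝ) • 1) ((2⁻¹ : ℝ) • 1) 0 with hA₀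
  refine ⟨n + n, φ, A₀.submatrix e.symm e.symm, 0, ?_, ?_, by simp, ?_⟩
  · refine continuous_pi fun j => ?_
    rcases h : e.symm j with i | i
    · simpa [hφ, h] using (map_continuous (f i))
    · simpa [hφ, h] using (map_continuous (g i))
  · have h0 : A₀ᵀ = -A₀ := by
      rw [hA₀, Matrix.fromBlocks_transpose]
      ext i j
      rcases i with i | i <;> rcases j with j | j <;> simp
    rw [Matrix.transpose_submatrix, h0]
    ext i j
    simp
  · intro x y
    have hcomp : ∀ z : K, φ z ∘ e = Sum.elim (fun i => f i z) (fun i => g i z) := by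
      intro z
      funext s
      simp [hφ, he]
    have hmv : A₀.submatrix e.symm e.symm *ᵥ φ x
        = (Sum.elim (-(2⁻¹ : ℝ) • fun i => g i x) ((2⁻¹ : ℝ) • fun i => f i x)) ∘ e.symm := by
      rw [Matrix.submatrix_mulVec_equiv A₀ (φ x) (e.symm : Fin (n+n) → Fin n ⊕ Fin n) e.symm]
      rw [Equiv.symm_symm, hcomp x, hA₀, Matrix.fromBlocks_mulVec]
      simp [Matrix.neg_mulVec, Matrix.smul_mulVec, Matrix.one_mulVec]
    have hdot : φ y ⬝ᵥ (A₀.submatrix e.symm e.symm *ᵥ φ x)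
        = (2⁻¹ : ℝ) * (∑ i, f i x * g i y) - (2⁻¹ : ℝ) * (∑ i, f i y * g i x) := by
      rw [hmv, dotProduct_comp_equiv_symm, hcomp y, sumElim_dotProduct_sumElim,
        dotProduct_smul, dotProduct_smul]
      simp only [dotProduct, smul_eq_mul, neg_smul, neg_mul, Finset.mul_sum]
      rw [Finset.sum_neg_distrib, neg_add_eq_sub]
      congr 1 <;> exact Finset.sum_congr rfl fun i _ => by ring
    simp only [Matrix.zero_mulVec, dotProduct_zero, mul_zero, add_zero, sub_zero, hdot]
    have h1 := hfg (x, y)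
    have h2 := hfg (y, x)
    have hS' : S (x, y) = 2⁻¹ * S (x, y) - 2⁻¹ * S (y, x) := by
      rw [hanti]; ring
    rw [hS']
    have : 2⁻¹ * S (x, y) - 2⁻¹ * S (y, x)
        - (2⁻¹ * (∑ i, f i x * g i y) - 2⁻¹ * (∑ i, f i y * g i x))
      = 2⁻¹ * (S (x, y) - ∑ i, f i x * g i y) - 2⁻¹ * (S (y, x) - ∑ i, f i y * g i x) := by
      ring
    rw [this]
    calc |2⁻¹ * (S (x, y) - ∑ i, f i x * g i y) - 2⁻¹ * (S (y, x) - ∑ i, f i y * g i x)|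
        ≤ |2⁻¹ * (S (x, y) - ∑ i, f i x * g i y)| + |2⁻¹ * (S (y, x) - ∑ i, f i y * g i x)| :=
          abs_sub _ _
      _ = 2⁻¹ * |S (x, y) - ∑ i, f i x * g i y| + 2⁻¹ * |S (y, x) - ∑ i, f i y * g i x| := by
          have h2 : |(2⁻¹ : ℝ)| = 2⁻¹ := abs_of_pos (by norm_num)
          rw [abs_mul, abs_mul, h2]
      _ < 2⁻¹ * ε + 2⁻¹ * ε := by
          exact add_lt_add (by nlinarith [h1]) (by nlinarith [h2])
      _ = ε := by ring
end

section
/- Let p and q be two probability densities on a measurable space with p absolutely continuous w.r.t. q. Then the functional J(S) = E_p[log σ(S)] + E_q[log(1 - σ(S))], where σ(z) = 1/(1+e^{-z}), is maximized over measurable functions S by S*(x) = log(p(x)/q(x)), and at the optimum E_p[S*] equals the KL divergence D_KL(p‖q). -/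
open MeasureTheory

/-- The logistic sigmoid `σ(z) = 1/(1+e^{-z})`. -/
noncomputable def logistic (z : ℝ) : ℝ := 1 / (1 + Real.exp (-z))

/-- The binary cross-entropy (contrastive) objective
`J(S) = E_p[log σ(S)] + E_q[log(1 - σ(S))]` for densities `p, q` w.r.t. `μ`. -/
noncomputable def bceObjective {α : Type*} [MeasurableSpace α] (μ : Measure α)
    (p q : α → ℝ) (S : α → ℝ) : ℝ :=
  (∫ x, p x * Real.log (logistic (S x)) ∂μ)
    + ∫ x, q x * Real.log (1 - logistic (S x)) ∂μ

/-- The KL divergence between the densities `p` and `q` w.r.t. `μ`. -/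
noncomputable def klDivDensity {α : Type*} [MeasurableSpace α] (μ : Measure α)
    (p q : α → ℝ) : ℝ :=
  ∫ x, p x * Real.log (p x / q x) ∂μ

lemma logistic_pos (z : ℝ) : 0 < logistic z := by
  have h : 0 < 1 + Real.exp (-z) := by positivity
  unfold logistic; positivity

lemma logistic_lt_one (z : ℝ) : logistic z < 1 := by
  have h : 0 < Real.exp (-z) := Real.exp_pos _
  have h1 : (1:ℝ) < 1 + Real.exp (-z) := by linarith
  have h0 : 0 < 1 + Real.exp (-z) := by linarith
  rw [logistic, div_lt_one h0]; exact h1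

lemma logistic_log_ratio {a b : ℝ} (ha : 0 < a) (hb : 0 < b) :
    logistic (Real.log (a / b)) = a / (a + b) := by
  have hab : 0 < a / b := div_pos ha hb
  rw [logistic, Real.exp_neg, Real.exp_log hab]
  field_simp

lemma one_sub_logistic_log_ratio {a b : ℝ} (ha : 0 < a) (hb : 0 < b) :
    1 - logistic (Real.log (a / b)) = b / (a + b) := by
  rw [logistic_log_ratio ha hb]
  field_simp
  ring

/-- Gibbs' inequality for Bernoulli, with Lean `log 0 = 0` conventions. -/
lemma gibbs_bernoulli {a b t : ℝ} (ha : 0 ≤ a) (hb : 0 ≤ b) (ht0 : 0 < t) (ht1 : t < 1) :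
    a * Real.log t + b * Real.log (1 - t)
      ≤ a * Real.log (a / (a + b)) + b * Real.log (b / (a + b)) := by
  rcases eq_or_lt_of_le ha with ha0 | ha
  · rcases eq_or_lt_of_le hb with hb0 | hb
    · simp [← ha0, ← hb0]
    · rw [← ha0]
      simp only [zero_mul, zero_add]
      rw [div_self (ne_of_gt hb), Real.log_one, mul_zero]
      exact mul_nonpos_of_nonneg_of_nonpos hb.le
        (Real.log_nonpos (by linarith) (by linarith))
  rcases eq_or_lt_of_le hb with hb0 | hb
  · rw [← hb0]
    simp only [zero_mul, add_zero]
    rw [div_self (ne_of_gt ha), Real.log_one, mul_zero]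
    exact mul_nonpos_of_nonneg_of_nonpos ha.le
      (Real.log_nonpos ht0.le ht1.le)
  · have hab : 0 < a + b := by linarith
    have h1 : Real.log t - Real.log (a / (a + b)) = Real.log (t * (a + b) / a) := by
      rw [Real.log_div (by positivity) (by positivity), Real.log_div (by positivity) (by positivity),
        Real.log_mul (by positivity) (by positivity)]
      ring
    have h2 : Real.log (1 - t) - Real.log (b / (a + b)) = Real.log ((1 - t) * (a + b) / b) := by
      rw [Real.log_div (ne_of_gt (mul_pos (by linarith) hab)) (by positivity),
        Real.log_div (by positivity) (by positivity),
        Real.log_mul (by linarith) (by positivity)]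
      ring
    have l1 : Real.log (t * (a + b) / a) ≤ t * (a + b) / a - 1 :=
      Real.log_le_sub_one_of_pos (by positivity)
    have l2 : Real.log ((1 - t) * (a + b) / b) ≤ (1 - t) * (a + b) / b - 1 :=
      Real.log_le_sub_one_of_pos (div_pos (mul_pos (by linarith) hab) hb)
    have key : a * (t * (a + b) / a - 1) + b * ((1 - t) * (a + b) / b - 1) = 0 := by
      field_simp
      ring
    nlinarith [mul_le_mul_of_nonneg_left l1 (le_of_lt ha),
      mul_le_mul_of_nonneg_left l2 (le_of_lt hb), h1, h2]

/-- For probability densities `p ≪ q` (and `q ≪ p`), the objective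
`J(S) = E_p[log σ(S)] + E_q[log(1-σ(S))]` is maximized over measurable `S` by the
log-density-ratio `S* = log(p/q)`, and `E_p[S*]` is the KL divergence `D_KL(p‖q)`. -/
theorem stmt_7 {α : Type*} [MeasurableSpace α] (μ : Measure α)
    (p q : α → ℝ) (hp : Measurable p) (hq : Measurable q)
    (hp0 : ∀ x, 0 ≤ p x) (hq0 : ∀ x, 0 ≤ q x)
    (hpnorm : ∫ x, p x ∂μ = 1) (hqnorm : ∫ x, q x ∂μ = 1)
    (hac : ∀ᵐ x ∂μ, q x = 0 → p x = 0)
    (hac' : ∀ᵐ x ∂μ, p x = 0 → q x = 0) :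
    (∀ S : α → ℝ, Measurable S →
        Integrable (fun x => p x * Real.log (logistic (S x))) μ →
        Integrable (fun x => q x * Real.log (1 - logistic (S x))) μ →
        bceObjective μ p q S ≤ bceObjective μ p q (fun x => Real.log (p x / q x)))
    ∧ (∫ x, p x * Real.log (p x / q x) ∂μ) = klDivDensity μ p q := by
  have hlogistic_cont : Continuous logistic := by
    apply Continuous.div continuous_const
    · exact continuous_const.add (Real.continuous_exp.comp continuous_neg)
    · intro z
      have := Real.exp_pos (-z)
      positivity
  set Sstar : α → ℝ := fun x => Real.log (p x / q x) with hSstar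
  have hSstar_meas : Measurable Sstar := Real.measurable_log.comp (hp.div hq)
  set g1 : α → ℝ := fun x => p x * Real.log (logistic (Sstar x)) with hg1def
  set g2 : α → ℝ := fun x => q x * Real.log (1 - logistic (Sstar x)) with hg2def
  have hg1_meas : Measurable g1 :=
    hp.mul (Real.measurable_log.comp (hlogistic_cont.measurable.comp hSstar_meas))
  have hg2_meas : Measurable g2 :=
    hq.mul (Real.measurable_log.comp
      ((measurable_const.sub (hlogistic_cont.measurable.comp hSstar_meas))))
  -- a.e. pointwise facts
  have hae : ∀ᵐ x ∂μ, (g1 x ≤ 0 ∧ g2 x ≤ 0) := by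
    filter_upwards [hac, hac'] with x h1 h2
    by_cases hpx : p x = 0
    · have hqx : q x = 0 := h2 hpx
      simp [hg1def, hg2def, hpx, hqx]
    · have hpx' : 0 < p x := lt_of_le_of_ne (hp0 x) (Ne.symm hpx)
      have hqx' : 0 < q x := by
        rcases eq_or_lt_of_le (hq0 x) with h | h
        · exact absurd (h1 h.symm) hpx
        · exact h
      constructor
      · apply mul_nonpos_of_nonneg_of_nonpos (hp0 x)
        apply Real.log_nonpos
        · have := logistic_pos (Sstar x); linarith
        · exact le_of_lt (logistic_lt_one (Sstar x))
      · apply mul_nonpos_of_nonneg_of_nonpos (hq0 x)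
        apply Real.log_nonpos
        · have := logistic_lt_one (Sstar x); linarith
        · have := logistic_pos (Sstar x); linarith
  constructor
  · intro S hS hI1 hI2
    set f1 : α → ℝ := fun x => p x * Real.log (logistic (S x)) with hf1def
    set f2 : α → ℝ := fun x => q x * Real.log (1 - logistic (S x)) with hf2def
    have hfle : ∀ᵐ x ∂μ, f1 x + f2 x ≤ g1 x + g2 x := by
      filter_upwards [hac, hac'] with x h1 h2
      by_cases hpx : p x = 0
      · have hqx : q x = 0 := h2 hpx
        simp [hf1def, hf2def, hg1def, hg2def, hpx, hqx]
      · have hpx' : 0 < p x := lt_of_le_of_ne (hp0 x) (Ne.symm hpx)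
        have hqx' : 0 < q x := by
          rcases eq_or_lt_of_le (hq0 x) with h | h
          · exact absurd (h1 h.symm) hpx
          · exact h
        have e1 : logistic (Sstar x) = p x / (p x + q x) := logistic_log_ratio hpx' hqx'
        have e2 : 1 - logistic (Sstar x) = q x / (p x + q x) :=
          one_sub_logistic_log_ratio hpx' hqx'
        have := gibbs_bernoulli (hp0 x) (hq0 x) (logistic_pos (S x)) (logistic_lt_one (S x))
        show p x * Real.log (logistic (S x)) + q x * Real.log (1 - logistic (S x))
          ≤ p x * Real.log (logistic (Sstar x)) + q x * Real.log (1 - logistic (Sstar x))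
        rw [e2, e1]
        exact this
    have hf : Integrable (fun x => f1 x + f2 x) μ := hI1.add hI2
    have hg_meas : Measurable (fun x => g1 x + g2 x) := hg1_meas.add hg2_meas
    have hg : Integrable (fun x => g1 x + g2 x) μ := by
      apply hf.mono hg_meas.aestronglyMeasurable
      filter_upwards [hae, hfle] with x ⟨e1, e2⟩ hle
      rw [Real.norm_eq_abs, Real.norm_eq_abs, abs_of_nonpos (by linarith)]
      calc -(g1 x + g2 x) ≤ -(f1 x + f2 x) := by linarith
        _ ≤ |f1 x + f2 x| := neg_le_abs _
    have hg1 : Integrable g1 μ := by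
      apply hg.mono hg1_meas.aestronglyMeasurable
      filter_upwards [hae] with x ⟨e1, e2⟩
      rw [Real.norm_eq_abs, Real.norm_eq_abs, abs_of_nonpos e1, abs_of_nonpos (by linarith)]
      linarith
    have hg2 : Integrable g2 μ := by
      apply hg.mono hg2_meas.aestronglyMeasurable
      filter_upwards [hae] with x ⟨e1, e2⟩
      rw [Real.norm_eq_abs, Real.norm_eq_abs, abs_of_nonpos e2, abs_of_nonpos (by linarith)]
      linarith
    have step : ∫ x, (f1 x + f2 x) ∂μ ≤ ∫ x, (g1 x + g2 x) ∂μ :=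
      integral_mono_ae hf hg hfle
    calc bceObjective μ p q S = ∫ x, (f1 x + f2 x) ∂μ := (integral_add hI1 hI2).symm
      _ ≤ ∫ x, (g1 x + g2 x) ∂μ := step
      _ = bceObjective μ p q Sstar := integral_add hg1 hg2
  · rfl
end

section
/- For any two probability measures p and q with p absolutely continuous w.r.t. q, and any bounded measurable function T, the KL divergence satisfies D_KL(p‖q) ≥ E_p[T] - E_q[e^T] + 1, with equality when T = log(dp/dq). -/
open MeasureTheory

lemma pointwise_dv {r t : ℝ} (hr : 0 ≤ r) :
    r * t - r * Real.log r ≤ Real.exp t - r := by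
  rcases eq_or_lt_of_le hr with h | h
  · simp [← h, (Real.exp_pos t).le]
  · have hx : 0 < Real.exp t / r := div_pos (Real.exp_pos t) h
    have h1 : Real.log (Real.exp t / r) ≤ Real.exp t / r - 1 :=
      Real.log_le_sub_one_of_pos hx
    have h2 : Real.log (Real.exp t / r) = t - Real.log r := by
      rw [Real.log_div (Real.exp_pos t).ne' h.ne', Real.log_exp]
    have := mul_le_mul_of_nonneg_left (h2 ▸ h1) hr
    calc r * t - r * Real.log r = r * (t - Real.log r) := by ring
      _ ≤ r * (Real.exp t / r - 1) := this
      _ = Real.exp t - r := by field_simp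

/-- Donsker–Varadhan-type bound: For probability measures `p ≪ q` with
integrable log-likelihood ratio, and any bounded measurable `T`,
`D_KL(p‖q) ≥ E_p[T] - E_q[e^T] + 1`, with equality when `T = log (dp/dq)`
(which requires also `q ≪ p` for the exponential term to integrate to `1`). -/
theorem stmt_8 {α : Type*} [MeasurableSpace α] (p q : Measure α)
    [IsProbabilityMeasure p] [IsProbabilityMeasure q]
    (hac : p ≪ q)
    (hint : Integrable (fun x => Real.log ((p.rnDeriv q x).toReal)) p) :
    (∀ T : α → ℝ, Measurable T → (∃ Cb : ℝ, ∀ x, |T x| ≤ Cb) →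
        (∫ x, T x ∂p) - (∫ x, Real.exp (T x) ∂q) + 1
          ≤ ∫ x, Real.log ((p.rnDeriv q x).toReal) ∂p)
    ∧ (q ≪ p →
        (∫ x, Real.log ((p.rnDeriv q x).toReal) ∂p)
          = (∫ x, Real.log ((p.rnDeriv q x).toReal) ∂p)
            - (∫ x, Real.exp (Real.log ((p.rnDeriv q x).toReal)) ∂q) + 1) := by
  set r : α → ℝ := fun x => (p.rnDeriv q x).toReal with hr
  have hrmeas : Measurable r := (Measure.measurable_rnDeriv p q).ennreal_toReal
  have hrnonneg : ∀ x, 0 ≤ r x := fun x => ENNReal.toReal_nonneg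
  have hrint : Integrable r q := Measure.integrable_toReal_rnDeriv
  have hrint1 : ∫ x, r x ∂q = 1 := by
    rw [hr, Measure.integral_toReal_rnDeriv hac]; simp
  constructor
  · intro T hT ⟨Cb, hCb⟩
    have hTint : Integrable T p := by
      refine ⟨hT.aestronglyMeasurable, ?_⟩
      exact HasFiniteIntegral.of_bounded (C := Cb) (ae_of_all _ fun x => hCb x)
    have heTint : Integrable (fun x => Real.exp (T x)) q := by
      refine ⟨(Real.measurable_exp.comp hT).aestronglyMeasurable, ?_⟩
      refine HasFiniteIntegral.of_bounded (C := Real.exp Cb) (ae_of_all _ fun x => ?_)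
      rw [Real.norm_eq_abs, abs_of_pos (Real.exp_pos _)]
      exact Real.exp_le_exp.2 ((abs_le.1 (hCb x)).2)
    -- key: ∫ T dp - ∫ log r dp ≤ ∫ e^T dq - 1
    have hTq : Integrable (fun x => r x * T x) q := by
      have := (integrable_rnDeriv_smul_iff hac (f := T)).2 hTint
      simpa [smul_eq_mul] using this
    have hLq : Integrable (fun x => r x * Real.log (r x)) q := by
      have := (integrable_rnDeriv_smul_iff hac
        (f := fun x => Real.log (r x))).2 hint
      simpa [smul_eq_mul] using this
    have hTp : ∫ x, r x * T x ∂q = ∫ x, T x ∂p := by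
      simpa [smul_eq_mul] using integral_rnDeriv_smul hac (f := T)
    have hLp : ∫ x, r x * Real.log (r x) ∂q = ∫ x, Real.log (r x) ∂p := by
      simpa [smul_eq_mul] using
        integral_rnDeriv_smul hac (f := fun x => Real.log (r x))
    have key : ∫ x, (r x * T x - r x * Real.log (r x)) ∂q
        ≤ ∫ x, (Real.exp (T x) - r x) ∂q := by
      refine integral_mono (hTq.sub hLq) (heTint.sub hrint) fun x => ?_
      exact pointwise_dv (hrnonneg x)
    rw [integral_sub hTq hLq, integral_sub heTint hrint, hTp, hLp, hrint1] at key
    linarith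
  · intro hqp
    have hpos : ∀ᵐ x ∂q, 0 < p.rnDeriv q x := hqp.ae_le (Measure.rnDeriv_pos hac)
    have hlt : ∀ᵐ x ∂q, p.rnDeriv q x < ⊤ := Measure.rnDeriv_lt_top p q
    have heq : ∫ x, Real.exp (Real.log (r x)) ∂q = 1 := by
      rw [← hrint1]
      refine integral_congr_ae ?_
      filter_upwards [hpos, hlt] with x h1 h2
      rw [Real.exp_log (ENNReal.toReal_pos h1.ne' h2.ne)]
    rw [heq]; ring
end

section
/- Let G, D, C be as in the Lyapunov setting with D, C symmetric positive definite and GC + CGᵀ = -2D. Then the entropy production rate Ṡ = Tr(Λᵀ D Λ C) with Λ = D⁻¹G + C⁻¹ is nonnegative, and Ṡ = 0 if and only if DC⁻¹ = -G (i.e., the dynamics are reversible / the steady-state probability current vanishes). -/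
open Matrix

private lemma tr_sq_nonneg {N : ℕ} (A : Matrix (Fin N) (Fin N) ℝ) :
    0 ≤ trace (Aᵀ * A) := by
  simp only [Matrix.trace, Matrix.diag, Matrix.mul_apply, Matrix.transpose_apply]
  exact Finset.sum_nonneg fun i _ => Finset.sum_nonneg fun j _ => mul_self_nonneg _

private lemma tr_sq_eq_zero {N : ℕ} (A : Matrix (Fin N) (Fin N) ℝ) :
    trace (Aᵀ * A) = 0 ↔ A = 0 := by
  constructor
  · intro h
    simp only [Matrix.trace, Matrix.diag, Matrix.mul_apply, Matrix.transpose_apply] at h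
    ext j i
    have h1 := (Finset.sum_eq_zero_iff_of_nonneg
      (fun i _ => Finset.sum_nonneg fun j _ => mul_self_nonneg (A j i))).mp h i
      (Finset.mem_univ i)
    have h2 := (Finset.sum_eq_zero_iff_of_nonneg
      (fun j _ => mul_self_nonneg (A j i))).mp h1 j (Finset.mem_univ j)
    simpa [mul_self_eq_zero] using h2
  · intro h; simp [h]

/-- With `D, C` symmetric positive definite and `GC + CGᵀ = -2D`,
the entropy production rate `Ṡ = Tr(ΛᵀDΛC)`, `Λ = D⁻¹G + C⁻¹`, is nonnegative,
and vanishes iff `DC⁻¹ = -G` (reversible dynamics). -/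
theorem stmt_11 {N : ℕ} (G D C : Matrix (Fin N) (Fin N) ℝ)
    (hD : D.PosDef) (hC : C.PosDef)
    (hLyap : G * C + C * Gᵀ = -((2 : ℝ) • D)) :
    0 ≤ trace ((D⁻¹ * G + C⁻¹)ᵀ * D * (D⁻¹ * G + C⁻¹) * C)
    ∧ (trace ((D⁻¹ * G + C⁻¹)ᵀ * D * (D⁻¹ * G + C⁻¹) * C) = 0 ↔ D * C⁻¹ = -G) := by
  have hDinv : (D⁻¹).PosDef := hD.inv
  have hDunit : IsUnit D.det := (isUnit_iff_isUnit_det D).1 hD.isUnit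
  have hCunit : IsUnit C.det := (isUnit_iff_isUnit_det C).1 hC.isUnit
  set M : Matrix (Fin N) (Fin N) ℝ := G + D * C⁻¹ with hM
  obtain ⟨P, hPt, hPP⟩ : ∃ P : Matrix (Fin N) (Fin N) ℝ, Pᵀ = P ∧ P * P = D⁻¹ := by
    open MatrixOrder in refine ⟨CFC.sqrt (D⁻¹), ?_, CFC.sqrt_mul_sqrt_self _ hDinv.posSemidef.nonneg⟩
    open MatrixOrder in have := (CFC.sqrt_nonneg (D⁻¹)).posSemidef.1
    rwa [Matrix.IsHermitian, conjTranspose_eq_transpose_of_trivial] at this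
  obtain ⟨Q, hQt, hQQ⟩ : ∃ Q : Matrix (Fin N) (Fin N) ℝ, Qᵀ = Q ∧ Q * Q = C := by
    open MatrixOrder in refine ⟨CFC.sqrt (C), ?_, CFC.sqrt_mul_sqrt_self _ hC.posSemidef.nonneg⟩
    open MatrixOrder in have := (CFC.sqrt_nonneg (C)).posSemidef.1
    rwa [Matrix.IsHermitian, conjTranspose_eq_transpose_of_trivial] at this
  have hDt : (D⁻¹)ᵀ = D⁻¹ := by
    rw [transpose_nonsing_inv]
    congr 1
    have := hD.1
    rwa [Matrix.IsHermitian, conjTranspose_eq_transpose_of_trivial] at this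
  have hLam : D⁻¹ * G + C⁻¹ = D⁻¹ * M := by
    rw [hM, mul_add, ← mul_assoc, Matrix.nonsing_inv_mul D hDunit, one_mul]
  -- rewrite the trace
  have key : trace ((D⁻¹ * G + C⁻¹)ᵀ * D * (D⁻¹ * G + C⁻¹) * C)
      = trace ((P * M * Q)ᵀ * (P * M * Q)) := by
    rw [hLam, transpose_mul, hDt, transpose_mul, transpose_mul, hPt, hQt]
    have h1 : Mᵀ * D⁻¹ * D * (D⁻¹ * M) * C = Mᵀ * (P * P * (M * (Q * Q))) := by
      rw [hPP, hQQ]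
      simp only [mul_assoc]
      rw [Matrix.nonsing_inv_mul_cancel_left D _ hDunit]
    rw [h1]
    conv_rhs => rw [mul_assoc, trace_mul_comm]
    congr 1
    simp only [mul_assoc]
  constructor
  · rw [key]; exact tr_sq_nonneg _
  · rw [key, tr_sq_eq_zero]
    constructor
    · intro h
      have h3 : D⁻¹ * (M * C) = 0 := by
        rw [← hPP, ← hQQ]
        calc P * P * (M * (Q * Q)) = P * (P * M * Q) * Q := by simp only [mul_assoc]
          _ = 0 := by rw [h]; simp
      have hM0 : M = 0 := by
        have h4 : M * C = 0 := by
          have := congrArg (fun X => D * X) h3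
          simpa [Matrix.mul_nonsing_inv_cancel_left D _ hDunit] using this
        have := congrArg (fun X => X * C⁻¹) h4
        simpa [mul_assoc, Matrix.mul_nonsing_inv C hCunit] using this
      have hG : G + D * C⁻¹ = 0 := hM0
      exact eq_neg_of_add_eq_zero_right hG
    · intro h
      have hM0 : M = 0 := by rw [hM, h]; simp
      rw [hM0]; simp
end

section
/- The stationary density ρ(x) = (1/Z) e^{(hx-U(x))/D} ∫_x^{x+L} e^{-(hy-U(y))/D} dy, with constant current J = D(1 - e^{-hL/D})/Z, satisfies the stationary Fokker–Planck relation (h - U'(x))ρ(x) - D ρ'(x) = J for all x. -/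
open intervalIntegral

/-- The stationary density of a driven overdamped particle in an `L`-periodic potential. -/
noncomputable def periodicDensity (U : ℝ → ℝ) (L h D Z : ℝ) (x : ℝ) : ℝ :=
  (1 / Z) * Real.exp ((h * x - U x) / D)
    * ∫ y in x..(x + L), Real.exp (-(h * y - U y) / D)

/-- The stationary density
`ρ(x) = (1/Z) e^{(hx-U(x))/D} ∫_x^{x+L} e^{-(hy-U(y))/D} dy`, with normalization `Z`
and constant current `J = D(1 - e^{-hL/D})/Z`, satisfies the stationary Fokker–Planck
relation `(h - U'(x)) ρ(x) - D ρ'(x) = J` for all `x`. -/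
theorem stmt_15 (U : ℝ → ℝ) (hU : ContDiff ℝ 1 U) (L h D : ℝ)
    (hL : 0 < L) (hh : 0 < h) (hD : 0 < D)
    (hper : ∀ x, U (x + L) = U x) :
    ∀ x : ℝ,
      (h - deriv U x) * periodicDensity U L h D
          (∫ z in (0:ℝ)..L, Real.exp ((h * z - U z) / D)
            * ∫ y in z..(z + L), Real.exp (-(h * y - U y) / D)) x
        - D * deriv (periodicDensity U L h D
            (∫ z in (0:ℝ)..L, Real.exp ((h * z - U z) / D)
              * ∫ y in z..(z + L), Real.exp (-(h * y - U y) / D))) x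
      = D * (1 - Real.exp (-(h * L) / D))
          / (∫ z in (0:ℝ)..L, Real.exp ((h * z - U z) / D)
              * ∫ y in z..(z + L), Real.exp (-(h * y - U y) / D)) := by
  intro x
  set Z : ℝ := ∫ z in (0:ℝ)..L, Real.exp ((h * z - U z) / D)
      * ∫ y in z..(z + L), Real.exp (-(h * y - U y) / D) with hZdef
  have hUc : Continuous U := hU.continuous
  have hUd : Differentiable ℝ U := hU.differentiable one_ne_zero
  set f : ℝ → ℝ := fun y => Real.exp (-(h * y - U y) / D) with hfdef
  have hf : Continuous f := by
    apply Real.continuous_exp.comp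
    exact (((continuous_const.mul continuous_id).sub hUc).neg).div_const D
  have hFeq : ∀ u : ℝ, (∫ y in u..(u + L), f y)
      = (∫ y in (0:ℝ)..(u + L), f y) - ∫ y in (0:ℝ)..u, f y := by
    intro u
    rw [intervalIntegral.integral_interval_sub_left (hf.intervalIntegrable _ _)
      (hf.intervalIntegrable _ _)]
  have hF : HasDerivAt (fun u => ∫ y in u..(u + L), f y) (f (x + L) - f x) x := by
    have h1 : HasDerivAt (fun u => ∫ y in (0:ℝ)..(u + L), f y) (f (x + L)) x := by
      have := (hf.integral_hasStrictDerivAt 0 (x + L)).hasDerivAt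
      have hcomp := this.comp x ((hasDerivAt_id x).add_const L)
      simpa [Function.comp_def] using hcomp
    have h2 : HasDerivAt (fun u => ∫ y in (0:ℝ)..u, f y) (f x) x :=
      (hf.integral_hasStrictDerivAt 0 x).hasDerivAt
    have h3 := h1.sub h2
    refine HasDerivAt.congr_of_eventuallyEq h3 ?_
    filter_upwards with u using (hFeq u)
  have hg : HasDerivAt (fun u => (h * u - U u) / D) ((h - deriv U x) / D) x := by
    simpa using (((hasDerivAt_id x).const_mul h).sub (hUd x).hasDerivAt).div_const D
  have hE : HasDerivAt (fun u => Real.exp ((h * u - U u) / D))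
      (Real.exp ((h * x - U x) / D) * ((h - deriv U x) / D)) x := hg.exp
  have hρ : HasDerivAt (periodicDensity U L h D Z)
      ((1 / Z * (Real.exp ((h * x - U x) / D) * ((h - deriv U x) / D)))
          * (∫ y in x..(x + L), f y)
        + (1 / Z * Real.exp ((h * x - U x) / D)) * (f (x + L) - f x)) x :=
    (hE.const_mul (1 / Z)).mul hF
  rw [hρ.deriv]
  have e1 : Real.exp ((h * x - U x) / D) * f x = 1 := by
    show Real.exp _ * Real.exp _ = 1
    rw [← Real.exp_add, ← Real.exp_zero]
    congr 1
    ring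
  have e2 : Real.exp ((h * x - U x) / D) * f (x + L) = Real.exp (-(h * L) / D) := by
    show Real.exp _ * Real.exp _ = _
    rw [← Real.exp_add, hper]
    congr 1
    ring
  have hDI : D * D⁻¹ = 1 := mul_inv_cancel₀ hD.ne'
  simp only [periodicDensity]
  linear_combination (D / Z) * e1 - (D / Z) * e2
    - ((h - deriv U x) * Real.exp ((h * x - U x) / D) * (∫ y in x..(x + L), f y) / Z) * hDI
end

section
/- For the two-distribution objective with σ the logistic function, expanding to second order: if S is small, then E_p[log σ(S)] + E_q[log(1-σ(S))] = -2log 2 + (1/2)(E_p[S] - E_q[S]) - (1/8)(E_p[S²] + E_q[S²]) + O(S³); in particular when q is the pushforward of p under argument exchange and S is antisymmetric, this equals -2log 2 + E_p[S - S²/4] + O(S³). -/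
open MeasureTheory Filter Topology Asymptotics

noncomputable def sigAux (z : ℝ) : ℝ := Real.exp z / (1 + Real.exp z)
noncomputable def Faux (z : ℝ) : ℝ := Real.log (1 + Real.exp z)
noncomputable def raux (z : ℝ) : ℝ := Faux z - (Real.log 2 + z / 2 + z ^ 2 / 8)

lemma one_add_exp_pos (z : ℝ) : 0 < 1 + Real.exp z := by positivity

lemma sigAux_hasDeriv (z : ℝ) :
    HasDerivAt sigAux (sigAux z * (1 - sigAux z)) z := by
  have h := (Real.hasDerivAt_exp z).div ((Real.hasDerivAt_exp z).const_add 1)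
      (ne_of_gt (one_add_exp_pos z))
  refine h.congr_deriv ?_
  have hz := one_add_exp_pos z
  unfold sigAux
  field_simp [sigAux]

lemma Faux_hasDeriv (z : ℝ) : HasDerivAt Faux (sigAux z) z :=
  ((Real.hasDerivAt_exp z).const_add 1).log (ne_of_gt (one_add_exp_pos z))

lemma sigAux_pos (z : ℝ) : 0 < sigAux z := div_pos (Real.exp_pos z) (one_add_exp_pos z)

lemma sigAux_lt_one (z : ℝ) : sigAux z < 1 :=
  (div_lt_one (one_add_exp_pos z)).2 (by linarith [Real.exp_pos z])

lemma sigAux_zero : sigAux 0 = 1/2 := by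
  simp [sigAux, Real.exp_zero]
  norm_num

lemma abs_sigAux_sub_half (z : ℝ) : |sigAux z - 1/2| ≤ |z| / 4 := by
  have key := Convex.norm_image_sub_le_of_norm_hasDerivWithin_le
    (f := sigAux) (f' := fun x => sigAux x * (1 - sigAux x)) (s := Set.univ)
    (C := 1/4)
    (fun x _ => (sigAux_hasDeriv x).hasDerivWithinAt)
    (fun x _ => by
      have h1 := sigAux_pos x
      have h2 := sigAux_lt_one x
      show ‖sigAux x * (1 - sigAux x)‖ ≤ 1/4
      rw [Real.norm_eq_abs, abs_le]
      constructor <;> nlinarith [sq_nonneg (sigAux x - 1/2)])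
    convex_univ (Set.mem_univ 0) (Set.mem_univ z)
  rw [sigAux_zero, sub_zero, Real.norm_eq_abs, Real.norm_eq_abs] at key
  linarith

lemma abs_le_of_mem_uIcc {x z : ℝ} (hx : x ∈ Set.uIcc 0 z) : |x| ≤ |z| := by
  rcases Set.mem_uIcc.mp hx with ⟨h1, h2⟩ | ⟨h1, h2⟩ <;> rw [abs_le] <;>
    constructor <;> nlinarith [le_abs_self z, neg_abs_le z]

lemma stepB (z : ℝ) : |sigAux z - 1/2 - z/4| ≤ |z|^3 / 16 := by
  have key := Convex.norm_image_sub_le_of_norm_hasDerivWithin_le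
    (f := fun x => sigAux x - 1/2 - x/4)
    (f' := fun x => sigAux x * (1 - sigAux x) - 1/4) (s := Set.uIcc 0 z)
    (C := |z|^2 / 16)
    (fun x _ => (((sigAux_hasDeriv x).sub_const (1/2)).sub
      ((hasDerivAt_id x).div_const 4)).hasDerivWithinAt)
    (fun x hx => by
      show ‖sigAux x * (1 - sigAux x) - 1/4‖ ≤ |z|^2 / 16
      have h1 : sigAux x * (1 - sigAux x) - 1/4 = -((sigAux x - 1/2)^2) := by ring
      rw [h1, Real.norm_eq_abs, abs_neg, abs_of_nonneg (sq_nonneg _)]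
      have h2 := abs_sigAux_sub_half x
      have h3 := abs_le_of_mem_uIcc hx
      nlinarith [abs_nonneg (sigAux x - 1/2), abs_nonneg x, sq_abs (sigAux x - 1/2)])
    (convex_uIcc 0 z) (Set.left_mem_uIcc) (Set.right_mem_uIcc)
  simp only [sub_zero, Real.norm_eq_abs, sigAux_zero] at key
  have h0 : sigAux z - 1/2 - z/4 - (1/2 - 1/2 - 0/4) = sigAux z - 1/2 - z/4 := by ring
  rw [h0] at key
  calc |sigAux z - 1/2 - z/4| ≤ |z|^2/16 * |z| := key
    _ = |z|^3/16 := by ring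

lemma raux_zero : raux 0 = 0 := by
  simp [raux, Faux]
  norm_num

lemma raux_hasDeriv (x : ℝ) : HasDerivAt raux (sigAux x - 1/2 - x/4) x := by
  have h : HasDerivAt (fun x : ℝ => Real.log 2 + x / 2 + x ^ 2 / 8)
      (1/2 + 2 * x ^ 1 / 8) x :=
    (((hasDerivAt_id x).div_const 2).const_add (Real.log 2)).add
      ((hasDerivAt_pow 2 x).div_const 8)
  have := (Faux_hasDeriv x).sub h
  refine this.congr_deriv ?_
  ring

lemma raux_bound (z : ℝ) : |raux z| ≤ z^4 / 16 := by
  have key := Convex.norm_image_sub_le_of_norm_hasDerivWithin_le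
    (f := raux) (f' := fun x => sigAux x - 1/2 - x/4) (s := Set.uIcc 0 z)
    (C := |z|^3 / 16)
    (fun x _ => (raux_hasDeriv x).hasDerivWithinAt)
    (fun x hx => by
      have h2 := stepB x
      have h3 := abs_le_of_mem_uIcc hx
      have h4 : |x|^3 ≤ |z|^3 := pow_le_pow_left₀ (abs_nonneg x) h3 3
      rw [Real.norm_eq_abs]
      linarith)
    (convex_uIcc 0 z) (Set.left_mem_uIcc) (Set.right_mem_uIcc)
  rw [raux_zero, sub_zero, sub_zero, Real.norm_eq_abs, Real.norm_eq_abs] at key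
  have h5 : |z|^3/16 * |z| = z^4/16 := by
    have : |z|^4 = z^4 := by
      rw [← abs_pow]; exact abs_of_nonneg (by positivity)
    nlinarith [this]
  linarith [key.trans_eq h5]

lemma logistic_eq (z : ℝ) : logistic z = Real.exp z / (1 + Real.exp z) := by
  unfold logistic
  rw [Real.exp_neg]
  have h1 := Real.exp_pos z
  have h2 := one_add_exp_pos z
  field_simp
  ring

lemma log_logistic_eq (z : ℝ) :
    Real.log (logistic z) = -Real.log 2 + z/2 - z^2/8 - raux z := by
  rw [logistic_eq, Real.log_div (Real.exp_ne_zero z) (ne_of_gt (one_add_exp_pos z)),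
    Real.log_exp]
  unfold raux Faux
  ring

lemma log_one_sub_logistic_eq (z : ℝ) :
    Real.log (1 - logistic z) = -Real.log 2 - z/2 - z^2/8 - raux z := by
  have h2 := one_add_exp_pos z
  have h1 : 1 - logistic z = (1 + Real.exp z)⁻¹ := by
    rw [logistic_eq]
    field_simp
    ring
  rw [h1, Real.log_inv]
  unfold raux Faux
  ring

lemma raux_measurable : Measurable raux := by
  unfold raux Faux
  exact (Real.measurable_log.comp (measurable_const.add Real.measurable_exp)).sub
    (by fun_prop)

lemma integrable_of_bdd {α : Type*} [MeasurableSpace α] (μ : Measure α)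
    [IsProbabilityMeasure μ] {f : α → ℝ} (hf : Measurable f) {C : ℝ}
    (hC : ∀ x, |f x| ≤ C) : Integrable f μ :=
  (integrable_const C).mono' hf.aestronglyMeasurable
    (Filter.Eventually.of_forall fun x => by simpa using hC x)

lemma integral_decomp {α : Type*} [MeasurableSpace α] (μ : Measure α)
    [IsProbabilityMeasure μ] {S : α → ℝ} (hS : Measurable S) {Cb : ℝ}
    (hCb : ∀ x, |S x| ≤ Cb) (a b c t : ℝ) :
    ∫ x, (c + (a * S x - (b * (S x)^2 + raux (t * S x)))) ∂μ
      = c + (a * ∫ x, S x ∂μ - (b * ∫ x, (S x)^2 ∂μ + ∫ x, raux (t * S x) ∂μ)) := by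
  have hS1 : Integrable S μ := integrable_of_bdd μ hS hCb
  have hS2 : Integrable (fun x => (S x)^2) μ := by
    refine integrable_of_bdd μ (hS.pow_const 2) (C := Cb^2) fun x => ?_
    rw [abs_pow]
    exact pow_le_pow_left₀ (abs_nonneg _) (hCb x) 2
  have hr : Integrable (fun x => raux (t * S x)) μ := by
    refine integrable_of_bdd μ (raux_measurable.comp (hS.const_mul t))
      (C := (|t| * Cb)^4 / 16) fun x => ?_
    refine (raux_bound (t * S x)).trans ?_
    have h1 : (t * S x)^4 = |t * S x|^4 := by
      rw [← abs_pow]; exact (abs_of_nonneg (by positivity)).symm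
    have h2 : |t * S x| ≤ |t| * Cb := by
      rw [abs_mul]
      exact mul_le_mul_of_nonneg_left (hCb x) (abs_nonneg t)
    have h3 : |t * S x|^4 ≤ (|t| * Cb)^4 := pow_le_pow_left₀ (abs_nonneg _) h2 4
    linarith [h1 ▸ h3]
  have e1 : ∫ x, (c + (a * S x - (b * (S x)^2 + raux (t * S x)))) ∂μ
      = (∫ _, c ∂μ) + ∫ x, (a * S x - (b * (S x)^2 + raux (t * S x))) ∂μ :=
    integral_add (integrable_const c) ((hS1.const_mul a).sub ((hS2.const_mul b).add hr))
  have e2 : ∫ x, (a * S x - (b * (S x)^2 + raux (t * S x))) ∂μ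
      = (∫ x, a * S x ∂μ) - ∫ x, (b * (S x)^2 + raux (t * S x)) ∂μ :=
    integral_sub (hS1.const_mul a) ((hS2.const_mul b).add hr)
  have e3 : ∫ x, (b * (S x)^2 + raux (t * S x)) ∂μ
      = (∫ x, b * (S x)^2 ∂μ) + ∫ x, raux (t * S x) ∂μ :=
    integral_add (hS2.const_mul b) hr
  rw [e1, e2, e3, integral_const, integral_const_mul, integral_const_mul]
  simp

theorem stmt_19' {α : Type*} [MeasurableSpace α] (p q : Measure α)
    [IsProbabilityMeasure p] [IsProbabilityMeasure q]
    (S : α → ℝ) (hS : Measurable S) (hb : ∃ Cb : ℝ, ∀ x, |S x| ≤ Cb) :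
    ((fun t : ℝ =>
        (∫ x, Real.log (logistic (t * S x)) ∂p)
          + (∫ x, Real.log (1 - logistic (t * S x)) ∂q)
          - (-(2 * Real.log 2)
              + t / 2 * ((∫ x, S x ∂p) - ∫ x, S x ∂q)
              - t ^ 2 / 8 * ((∫ x, (S x) ^ 2 ∂p) + ∫ x, (S x) ^ 2 ∂q)))
      =O[𝓝 (0 : ℝ)] fun t => t ^ 3)
    ∧ (∀ e : α → α, Measurable e → q = p.map e → (∀ x, S (e x) = - S x) →
        (fun t : ℝ =>
            (∫ x, Real.log (logistic (t * S x)) ∂p)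
              + (∫ x, Real.log (1 - logistic (t * S x)) ∂q)
              - (-(2 * Real.log 2)
                  + ∫ x, (t * S x - (t * S x) ^ 2 / 4) ∂p))
          =O[𝓝 (0 : ℝ)] fun t => t ^ 3) := by
  obtain ⟨Cb0, hCb0⟩ := hb
  set Cb : ℝ := |Cb0| with hCbdef
  have hCb : ∀ x, |S x| ≤ Cb := fun x => (hCb0 x).trans (le_abs_self Cb0)
  have hCbnn : 0 ≤ Cb := abs_nonneg Cb0
  have hp1 : ∀ t : ℝ, ∫ x, Real.log (logistic (t * S x)) ∂p
      = -Real.log 2 + (t/2 * (∫ x, S x ∂p)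
          - (t^2/8 * (∫ x, (S x)^2 ∂p) + ∫ x, raux (t * S x) ∂p)) := by
    intro t
    have hpt : ∀ x, Real.log (logistic (t * S x))
        = -Real.log 2 + (t/2 * S x - (t^2/8 * (S x)^2 + raux (t * S x))) := fun x => by
      rw [log_logistic_eq]; ring
    rw [integral_congr_ae (Filter.Eventually.of_forall hpt)]
    exact integral_decomp p hS hCb (t/2) (t^2/8) (-Real.log 2) t
  have hq1 : ∀ t : ℝ, ∫ x, Real.log (1 - logistic (t * S x)) ∂q
      = -Real.log 2 + (-(t/2) * (∫ x, S x ∂q)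
          - (t^2/8 * (∫ x, (S x)^2 ∂q) + ∫ x, raux (t * S x) ∂q)) := by
    intro t
    have hpt : ∀ x, Real.log (1 - logistic (t * S x))
        = -Real.log 2 + (-(t/2) * S x - (t^2/8 * (S x)^2 + raux (t * S x))) := fun x => by
      rw [log_one_sub_logistic_eq]; ring
    rw [integral_congr_ae (Filter.Eventually.of_forall hpt)]
    exact integral_decomp q hS hCb (-(t/2)) (t^2/8) (-Real.log 2) t
  have hRbound : ∀ (μ : Measure α) [IsProbabilityMeasure μ], ∀ t : ℝ,
      |∫ x, raux (t * S x) ∂μ| ≤ (|t| * Cb)^4 / 16 := by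
    intro μ _ t
    have := norm_integral_le_of_norm_le_const (μ := μ)
      (f := fun x => raux (t * S x)) (C := (|t| * Cb)^4 / 16)
      (Filter.Eventually.of_forall fun x => by
        rw [Real.norm_eq_abs]
        refine (raux_bound (t * S x)).trans ?_
        have h1 : (t * S x)^4 = |t * S x|^4 := by
          rw [← abs_pow]; exact (abs_of_nonneg (by positivity)).symm
        have h2 : |t * S x| ≤ |t| * Cb := by
          rw [abs_mul]
          exact mul_le_mul_of_nonneg_left (hCb x) (abs_nonneg t)
        have h3 : |t * S x|^4 ≤ (|t| * Cb)^4 := pow_le_pow_left₀ (abs_nonneg _) h2 4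
        linarith [h1 ▸ h3])
    simpa [Real.norm_eq_abs, measure_univ] using this
  have main : (fun t : ℝ =>
        (∫ x, Real.log (logistic (t * S x)) ∂p)
          + (∫ x, Real.log (1 - logistic (t * S x)) ∂q)
          - (-(2 * Real.log 2)
              + t / 2 * ((∫ x, S x ∂p) - ∫ x, S x ∂q)
              - t ^ 2 / 8 * ((∫ x, (S x) ^ 2 ∂p) + ∫ x, (S x) ^ 2 ∂q)))
      =O[𝓝 (0 : ℝ)] fun t => t ^ 3 := by
    rw [Asymptotics.isBigO_iff]
    refine ⟨Cb^4 / 8, ?_⟩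
    filter_upwards [Metric.ball_mem_nhds (0:ℝ) one_pos] with t ht
    rw [Metric.mem_ball, Real.dist_eq, sub_zero] at ht
    have hRp := hRbound p t
    have hRq := hRbound q t
    have heq : (∫ x, Real.log (logistic (t * S x)) ∂p)
          + (∫ x, Real.log (1 - logistic (t * S x)) ∂q)
          - (-(2 * Real.log 2)
              + t / 2 * ((∫ x, S x ∂p) - ∫ x, S x ∂q)
              - t ^ 2 / 8 * ((∫ x, (S x) ^ 2 ∂p) + ∫ x, (S x) ^ 2 ∂q))
        = -((∫ x, raux (t * S x) ∂p) + ∫ x, raux (t * S x) ∂q) := by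
      rw [hp1 t, hq1 t]; ring
    calc ‖(∫ x, Real.log (logistic (t * S x)) ∂p)
          + (∫ x, Real.log (1 - logistic (t * S x)) ∂q)
          - (-(2 * Real.log 2)
              + t / 2 * ((∫ x, S x ∂p) - ∫ x, S x ∂q)
              - t ^ 2 / 8 * ((∫ x, (S x) ^ 2 ∂p) + ∫ x, (S x) ^ 2 ∂q))‖
        ≤ |∫ x, raux (t * S x) ∂p| + |∫ x, raux (t * S x) ∂q| := by
          rw [heq, Real.norm_eq_abs, abs_neg]
          exact abs_add_le _ _
      _ ≤ 2 * ((|t| * Cb)^4 / 16) := by linarith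
      _ = Cb^4 / 8 * |t|^4 := by rw [mul_pow]; ring
      _ ≤ Cb^4 / 8 * |t|^3 := by
          have h4 : |t|^4 ≤ |t|^3 :=
            pow_le_pow_of_le_one (abs_nonneg t) (le_of_lt ht) (by norm_num)
          have h5 : (0:ℝ) ≤ Cb^4 / 8 := by positivity
          exact mul_le_mul_of_nonneg_left h4 h5
      _ = Cb^4 / 8 * ‖t^3‖ := by rw [Real.norm_eq_abs, abs_pow]
  refine ⟨main, ?_⟩
  intro e he hqe hanti
  have hS1 : Integrable S p := integrable_of_bdd p hS hCb
  have hS2 : Integrable (fun x => (S x)^2) p := by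
    refine integrable_of_bdd p (hS.pow_const 2) (C := Cb^2) fun x => ?_
    rw [abs_pow]
    exact pow_le_pow_left₀ (abs_nonneg _) (hCb x) 2
  have hIq : ∫ x, S x ∂q = -∫ x, S x ∂p := by
    rw [hqe, integral_map he.aemeasurable
      (hS.aestronglyMeasurable (μ := p.map e))]
    simp only [hanti]
    exact integral_neg S
  have hJq : ∫ x, (S x)^2 ∂q = ∫ x, (S x)^2 ∂p := by
    rw [hqe, integral_map he.aemeasurable
      ((hS.pow_const 2).aestronglyMeasurable (μ := p.map e))]
    simp only [hanti, neg_sq]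
  have hint : ∀ t : ℝ, ∫ x, (t * S x - (t * S x)^2/4) ∂p
      = t * (∫ x, S x ∂p) - t^2/4 * ∫ x, (S x)^2 ∂p := by
    intro t
    have hpt : ∀ x, t * S x - (t * S x)^2/4 = t * S x - (t^2/4) * (S x)^2 := fun x => by
      ring
    rw [integral_congr_ae (Filter.Eventually.of_forall hpt)]
    have e1 : ∫ x, (t * S x - (t^2/4) * (S x)^2) ∂p
        = (∫ x, t * S x ∂p) - ∫ x, (t^2/4) * (S x)^2 ∂p :=
      integral_sub (hS1.const_mul t) (hS2.const_mul _)
    rw [e1, integral_const_mul, integral_const_mul]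
  refine main.congr (fun t => ?_) (fun _ => rfl)
  rw [hint t, hIq, hJq]
  ring

/-- Second-order expansion of the binary cross-entropy objective for a
small (scaled) logit `tS`:
`E_p[log σ(tS)] + E_q[log(1-σ(tS))]
  = -2 log 2 + (t/2)(E_p[S] - E_q[S]) - (t²/8)(E_p[S²] + E_q[S²]) + O(t³)`;
and when `q` is the pushforward of `p` under an exchange map under which `S` is
antisymmetric, this equals `-2 log 2 + E_p[tS - (tS)²/4] + O(t³)`. -/
theorem stmt_19 {α : Type*} [MeasurableSpace α] (p q : Measure α)
    [IsProbabilityMeasure p] [IsProbabilityMeasure q]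
    (S : α → ℝ) (hS : Measurable S) (hb : ∃ Cb : ℝ, ∀ x, |S x| ≤ Cb) :
    ((fun t : ℝ =>
        (∫ x, Real.log (logistic (t * S x)) ∂p)
          + (∫ x, Real.log (1 - logistic (t * S x)) ∂q)
          - (-(2 * Real.log 2)
              + t / 2 * ((∫ x, S x ∂p) - ∫ x, S x ∂q)
              - t ^ 2 / 8 * ((∫ x, (S x) ^ 2 ∂p) + ∫ x, (S x) ^ 2 ∂q)))
      =O[𝓝 (0 : ℝ)] fun t => t ^ 3)
    ∧ (∀ e : α → α, Measurable e → q = p.map e → (∀ x, S (e x) = - S x) →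
        (fun t : ℝ =>
            (∫ x, Real.log (logistic (t * S x)) ∂p)
              + (∫ x, Real.log (1 - logistic (t * S x)) ∂q)
              - (-(2 * Real.log 2)
                  + ∫ x, (t * S x - (t * S x) ^ 2 / 4) ∂p))
          =O[𝓝 (0 : ℝ)] fun t => t ^ 3) :=
  stmt_19' p q S hS hb
end
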